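/- Let C be a self-orthogonal code of length n over F₄+uF₄ (with respect to the Euclidean inner product). Then its image under the composition φ_{F₂+uF₂} ∘ ψ_{F₄+uF₄} is a self-orthogonal binary linear code of length 4n; moreover if C is self-dual then the binary image is a self-dual [4n, 2n] code. -/

import Mathlib

namespace Stmt9Aux

open TrivSqZeroExt

abbrev F4 := GaloisField 2 2
noncomputable abbrev em : ZMod 2 →+* F4 := algebraMap (ZMod 2) (GaloisField 2 2)

lemma two_eq_zero : (2 : F4) = 0 := by
  rw [← map_ofNat em 2, show ((2 : ZMod 2)) = 0 from rfl, map_zero]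

lemma lin_indep {ω : F4} (hω : ω ^ 2 + ω + 1 = 0) :
    ∀ c d : ZMod 2, em c * ω + em d * (1 + ω) = 0 → c = 0 ∧ d = 0 := by
  have h2 := two_eq_zero
  have hcd : ∀ c : ZMod 2, c = 0 ∨ c = 1 := by decide
  intro c d h
  rcases hcd c with rfl | rfl <;> rcases hcd d with rfl | rfl <;>
    simp only [map_one, map_zero, one_mul, zero_mul, add_zero, zero_add] at h
  · exact ⟨rfl, rfl⟩
  · exact absurd (by linear_combination hω - ω * h) (one_ne_zero (α := F4))
  · exact absurd (by linear_combination hω - (ω + 1) * h) (one_ne_zero (α := F4))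
  · exact absurd (by linear_combination h - ω * h2) (one_ne_zero (α := F4))

section
variable {ω : F4} {α β : F4 → ZMod 2}

lemma uniq (hω : ω ^ 2 + ω + 1 = 0)
    (hrep : ∀ t, t = em (α t) * ω + em (β t) * (1 + ω)) :
    ∀ c d t, em c * ω + em d * (1 + ω) = t → α t = c ∧ β t = d := by
  intro c d t h
  have h0 : em (α t - c) * ω + em (β t - d) * (1 + ω) = 0 := by
    rw [map_sub, map_sub]
    linear_combination -hrep t - h
  obtain ⟨h1, h2⟩ := lin_indep hω _ _ h0
  exact ⟨sub_eq_zero.mp h1, sub_eq_zero.mp h2⟩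

lemma alpha_zero (hω : ω ^ 2 + ω + 1 = 0)
    (hrep : ∀ t, t = em (α t) * ω + em (β t) * (1 + ω)) :
    α 0 = 0 ∧ β 0 = 0 :=
  uniq hω hrep 0 0 0 (by simp)

lemma alpha_add (hω : ω ^ 2 + ω + 1 = 0)
    (hrep : ∀ t, t = em (α t) * ω + em (β t) * (1 + ω)) (s t : F4) :
    α (s + t) = α s + α t ∧ β (s + t) = β s + β t :=
  uniq hω hrep _ _ _ (by rw [map_add, map_add]; linear_combination -hrep s - hrep t)

lemma alpha_mul (hω : ω ^ 2 + ω + 1 = 0)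
    (hrep : ∀ t, t = em (α t) * ω + em (β t) * (1 + ω)) (s t : F4) :
    α (s * t) = β s * β t + α s * β t + β s * α t ∧
      β (s * t) = α s * α t + α s * β t + β s * α t := by
  refine uniq hω hrep _ _ _ ?_
  conv_rhs => rw [hrep s, hrep t]
  simp only [map_add, map_mul]
  linear_combination (-(em (α s) * em (α t) + em (α s) * em (β t) + em (β s) * em (α t)
    + em (β s) * em (β t))) * hω +
    ((em (α s) * em (α t) + em (α s) * em (β t) + em (β s) * em (α t)) * (ω + 1)) * two_eq_zero

lemma alpha_omega (hω : ω ^ 2 + ω + 1 = 0)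
    (hrep : ∀ t, t = em (α t) * ω + em (β t) * (1 + ω)) :
    α ω = 1 ∧ β ω = 0 :=
  uniq hω hrep 1 0 ω (by simp)

end
end Stmt9Aux

set_option maxHeartbeats 1000000 in
/-- The binary Gray image of a self-orthogonal code over F₄+uF₄ is a
self-orthogonal binary linear code of length 4n; if the code is self-dual,
the binary image is a self-dual [4n, 2n] code. -/
theorem stmt_9 {n : ℕ} (ω : GaloisField 2 2) (hω : ω ^ 2 + ω + 1 = 0)
    (α β : GaloisField 2 2 → ZMod 2)
    (hrep : ∀ t, t = algebraMap (ZMod 2) (GaloisField 2 2) (α t) * ω +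
        algebraMap (ZMod 2) (GaloisField 2 2) (β t) * (1 + ω))
    (C : Submodule (DualNumber (GaloisField 2 2))
      (Fin n → DualNumber (GaloisField 2 2)))
    (hso : ∀ x ∈ C, ∀ y ∈ C, ∑ i, x i * y i = 0) :
    let Φ : (Fin n → DualNumber (GaloisField 2 2)) → (Fin n → Fin 4 → ZMod 2) :=
      fun x i => ![α (TrivSqZeroExt.snd (x i)), β (TrivSqZeroExt.snd (x i)),
        α (TrivSqZeroExt.fst (x i)) + α (TrivSqZeroExt.snd (x i)),
        β (TrivSqZeroExt.fst (x i)) + β (TrivSqZeroExt.snd (x i))]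
    (∀ x ∈ C, ∀ y ∈ C, ∑ i, ∑ j, Φ x i j * Φ y i j = 0) ∧
    (∃ D : Submodule (ZMod 2) (Fin n → Fin 4 → ZMod 2),
      (D : Set (Fin n → Fin 4 → ZMod 2)) = Φ '' (C : Set _)) ∧
    ((C : Set (Fin n → DualNumber (GaloisField 2 2)))
        = {x | ∀ y ∈ C, ∑ i, x i * y i = 0} →
      Nat.card (Φ '' (C : Set _)) = 2 ^ (2 * n) ∧
      Φ '' (C : Set _) = {v | ∀ w ∈ Φ '' (C : Set _), ∑ i, ∑ j, v i j * w i j = 0}) := by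
  intro Φ
  have hΦdef : Φ = fun x i => ![α (TrivSqZeroExt.snd (x i)), β (TrivSqZeroExt.snd (x i)),
      α (TrivSqZeroExt.fst (x i)) + α (TrivSqZeroExt.snd (x i)),
      β (TrivSqZeroExt.fst (x i)) + β (TrivSqZeroExt.snd (x i))] := rfl
  have h22 : (2 : ZMod 2) = 0 := rfl
  have hα0 := (Stmt9Aux.alpha_zero hω hrep).1
  have hβ0 := (Stmt9Aux.alpha_zero hω hrep).2
  have hαa : ∀ s t : GaloisField 2 2, α (s + t) = α s + α t :=
    fun s t => (Stmt9Aux.alpha_add hω hrep s t).1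
  have hβa : ∀ s t : GaloisField 2 2, β (s + t) = β s + β t :=
    fun s t => (Stmt9Aux.alpha_add hω hrep s t).2
  have hαm := fun s t => (Stmt9Aux.alpha_mul hω hrep s t).1
  have hβm := fun s t => (Stmt9Aux.alpha_mul hω hrep s t).2
  have hαs : ∀ f : Fin n → GaloisField 2 2, α (∑ i, f i) = ∑ i, α (f i) :=
    fun f => map_sum (AddMonoidHom.mk' α hαa) f Finset.univ
  have hβs : ∀ f : Fin n → GaloisField 2 2, β (∑ i, f i) = ∑ i, β (f i) :=
    fun f => map_sum (AddMonoidHom.mk' β hβa) f Finset.univ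
  -- the key identity
  have key : ∀ x y : Fin n → DualNumber (GaloisField 2 2),
      ∑ i, ∑ j, Φ x i j * Φ y i j =
        (α (TrivSqZeroExt.fst (∑ i, x i * y i)) + β (TrivSqZeroExt.fst (∑ i, x i * y i))) +
        (α (TrivSqZeroExt.snd (∑ i, x i * y i)) + β (TrivSqZeroExt.snd (∑ i, x i * y i))) := by
    intro x y
    rw [TrivSqZeroExt.fst_sum, TrivSqZeroExt.snd_sum, hαs, hβs, hαs, hβs,
      ← Finset.sum_add_distrib, ← Finset.sum_add_distrib, ← Finset.sum_add_distrib]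
    refine Finset.sum_congr rfl fun i _ => ?_
    rw [hΦdef]
    simp only [Fin.sum_univ_four, Matrix.cons_val_zero, Matrix.cons_val_one,
      Matrix.head_cons, Matrix.cons_val_two, Matrix.tail_cons, Matrix.cons_val_three,
      Matrix.head_fin_const]
    simp only [TrivSqZeroExt.fst_mul, TrivSqZeroExt.snd_mul, smul_eq_mul,
      op_smul_eq_mul, hαa, hβa, hαm, hβm]
    linear_combination (α (TrivSqZeroExt.snd (x i)) * α (TrivSqZeroExt.snd (y i))
      + β (TrivSqZeroExt.snd (x i)) * β (TrivSqZeroExt.snd (y i))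
      - α (TrivSqZeroExt.fst (x i)) * β (TrivSqZeroExt.fst (y i))
      - β (TrivSqZeroExt.fst (x i)) * α (TrivSqZeroExt.fst (y i))
      - α (TrivSqZeroExt.fst (x i)) * β (TrivSqZeroExt.snd (y i))
      - β (TrivSqZeroExt.fst (x i)) * α (TrivSqZeroExt.snd (y i))
      - α (TrivSqZeroExt.snd (x i)) * β (TrivSqZeroExt.fst (y i))
      - β (TrivSqZeroExt.snd (x i)) * α (TrivSqZeroExt.fst (y i))) * h22
  -- the submodule D
  have hΦadd : ∀ x y, Φ (x + y) = Φ x + Φ y := by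
    intro x y
    funext i j
    fin_cases j <;>
      simp [hΦdef, hαa, hβa] <;> ring
  let ΦH : (Fin n → DualNumber (GaloisField 2 2)) →+ (Fin n → Fin 4 → ZMod 2) :=
    AddMonoidHom.mk' Φ hΦadd
  let D : Submodule (ZMod 2) (Fin n → Fin 4 → ZMod 2) :=
    AddSubgroup.toZModSubmodule 2 ((Submodule.toAddSubgroup C).map ΦH)
  have hDset : (D : Set (Fin n → Fin 4 → ZMod 2)) = Φ '' (C : Set _) := by
    simp only [D, AddSubgroup.coe_toZModSubmodule, AddSubgroup.coe_map,
      Submodule.coe_toAddSubgroup]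
    rfl
  refine ⟨?_, ⟨D, hDset⟩, ?_⟩
  · intro x hx y hy
    rw [key x y, hso x hx y hy]
    simp [hα0, hβ0]
  intro hC
  -- the self-duality of the image
  have himage : Φ '' (C : Set _) =
      {v | ∀ w ∈ Φ '' (C : Set _), ∑ i, ∑ j, v i j * w i j = 0} := by
    apply Set.Subset.antisymm
    · rintro _ ⟨x, hx, rfl⟩ w ⟨y, hy, rfl⟩
      rw [key x y, hso x hx y hy]
      simp [hα0, hβ0]
    · intro v hv
      set x : Fin n → DualNumber (GaloisField 2 2) := fun i =>
        TrivSqZeroExt.inl (Stmt9Aux.em (v i 2 + v i 0) * ω + Stmt9Aux.em (v i 3 + v i 1) * (1 + ω)) +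
        TrivSqZeroExt.inr (Stmt9Aux.em (v i 0) * ω + Stmt9Aux.em (v i 1) * (1 + ω)) with hxdef
      have hxfst : ∀ i, TrivSqZeroExt.fst (x i) =
          Stmt9Aux.em (v i 2 + v i 0) * ω + Stmt9Aux.em (v i 3 + v i 1) * (1 + ω) := by
        intro i; simp [hxdef]
      have hxsnd : ∀ i, TrivSqZeroExt.snd (x i) =
          Stmt9Aux.em (v i 0) * ω + Stmt9Aux.em (v i 1) * (1 + ω) := by
        intro i; simp [hxdef]
      have hcancel : ∀ a b : ZMod 2, a + b + b = a := by decide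
      have hΦx : Φ x = v := by
        funext i j
        have e1 := Stmt9Aux.uniq hω hrep _ _ _ (hxfst i).symm
        have e2 := Stmt9Aux.uniq hω hrep _ _ _ (hxsnd i).symm
        fin_cases j <;>
          simp [hΦdef, e1.1, e1.2, e2.1, e2.2, hcancel]
      refine ⟨x, ?_, hΦx⟩
      show x ∈ (C : Set _)
      rw [hC]
      intro y hy
      set s : DualNumber (GaloisField 2 2) := ∑ i, x i * y i with hs
      have hlam : ∀ r : DualNumber (GaloisField 2 2),
          (α (TrivSqZeroExt.fst (r * s)) + β (TrivSqZeroExt.fst (r * s))) +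
          (α (TrivSqZeroExt.snd (r * s)) + β (TrivSqZeroExt.snd (r * s))) = 0 := by
        intro r
        have hry : r • y ∈ C := C.smul_mem r hy
        have h1 := hv (Φ (r • y)) ⟨r • y, hry, rfl⟩
        rw [← hΦx, key x (r • y)] at h1
        have hsum : ∑ i, x i * (r • y) i = r * s := by
          rw [hs, Finset.mul_sum]
          refine Finset.sum_congr rfl fun i _ => ?_
          simp only [Pi.smul_apply, smul_eq_mul]
          ring
        rwa [hsum] at h1
      have hω1 := (Stmt9Aux.alpha_omega hω hrep).1
      have hω0 := (Stmt9Aux.alpha_omega hω hrep).2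
      have hsfst : TrivSqZeroExt.fst s = 0 := by
        by_contra h
        have hr := hlam (TrivSqZeroExt.inr (ω * (TrivSqZeroExt.fst s)⁻¹))
        rw [TrivSqZeroExt.fst_mul, TrivSqZeroExt.snd_mul] at hr
        simp only [TrivSqZeroExt.fst_inr, TrivSqZeroExt.snd_inr, zero_mul, zero_smul,
          smul_eq_mul, op_smul_eq_mul, zero_add] at hr
        rw [mul_assoc, inv_mul_cancel₀ h, mul_one] at hr
        rw [hα0, hβ0, hω1, hω0] at hr
        exact absurd hr (by decide)
      have hssnd : TrivSqZeroExt.snd s = 0 := by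
        by_contra h
        have hr := hlam (TrivSqZeroExt.inl (ω * (TrivSqZeroExt.snd s)⁻¹))
        rw [TrivSqZeroExt.fst_mul, TrivSqZeroExt.snd_mul] at hr
        simp only [TrivSqZeroExt.fst_inl, TrivSqZeroExt.snd_inl, hsfst, mul_zero,
          smul_eq_mul, op_smul_eq_mul, zero_mul, add_zero, smul_zero] at hr
        rw [mul_assoc, inv_mul_cancel₀ h, mul_one] at hr
        rw [hα0, hβ0, hω1, hω0] at hr
        exact absurd hr (by decide)
      show s = 0
      exact TrivSqZeroExt.ext (by simpa using hsfst) (by simpa using hssnd)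
  have hBadd1 : ∀ v v' w : Fin n → Fin 4 → ZMod 2,
      ∑ i, ∑ j, (v + v') i j * w i j = (∑ i, ∑ j, v i j * w i j) + ∑ i, ∑ j, v' i j * w i j := by
    intro v v' w
    rw [← Finset.sum_add_distrib]
    refine Finset.sum_congr rfl fun i _ => ?_
    rw [← Finset.sum_add_distrib]
    exact Finset.sum_congr rfl fun j _ => by simp [add_mul]
  let Bf : LinearMap.BilinForm (ZMod 2) (Fin n → Fin 4 → ZMod 2) :=
    LinearMap.mk₂ (ZMod 2) (fun v w => ∑ i, ∑ j, v i j * w i j)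
      (fun v v' w => hBadd1 v v' w)
      (fun c v w => by
        simp only [Pi.smul_apply, smul_eq_mul, Finset.mul_sum]
        exact Finset.sum_congr rfl fun i _ => Finset.sum_congr rfl fun j _ => by ring)
      (fun v w w' => by
        rw [← Finset.sum_add_distrib]
        refine Finset.sum_congr rfl fun i _ => ?_
        rw [← Finset.sum_add_distrib]
        exact Finset.sum_congr rfl fun j _ => by simp [mul_add])
      (fun c v w => by
        simp only [Pi.smul_apply, smul_eq_mul, Finset.mul_sum]
        exact Finset.sum_congr rfl fun i _ => Finset.sum_congr rfl fun j _ => by ring)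
  have hBapp : ∀ v w, Bf v w = ∑ i, ∑ j, v i j * w i j := fun v w => rfl
  have hsymm : ∀ v w, Bf v w = Bf w v := by
    intro v w
    rw [hBapp, hBapp]
    exact Finset.sum_congr rfl fun i _ => Finset.sum_congr rfl fun j _ => mul_comm _ _
  have hrefl : Bf.IsRefl := fun v w h => by rw [hsymm w v]; exact h
  have hnd : Bf.Nondegenerate := by
    refine (fun hL : LinearMap.SeparatingLeft Bf =>
      ⟨hL, fun w hw => hL w fun v => by rw [hsymm]; exact hw v⟩) ?_
    intro v hv
    funext i j
    have h := hv (Pi.single i (Pi.single j 1))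
    rw [hBapp] at h
    simp only [Pi.single_apply, ite_apply, Pi.zero_apply, mul_ite, mul_one, mul_zero] at h
    rw [Finset.sum_eq_single i (fun b _ hb => by simp [hb]) (by simp)] at h
    simp only [if_pos rfl, if_true] at h
    rw [Finset.sum_ite_eq' Finset.univ j (v i)] at h
    simpa using h
  have hmem : ∀ u, u ∈ D ↔ u ∈ Φ '' (C : Set _) := by
    intro u
    rw [← SetLike.mem_coe, hDset]
  have hDo : Bf.orthogonal D = D := by
    ext w
    rw [LinearMap.BilinForm.mem_orthogonal_iff]
    constructor
    · intro h
      rw [hmem, himage]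
      intro u hu
      rw [← hBapp w u, hsymm w u, ← LinearMap.BilinForm.isOrtho_def]
      exact h u ((hmem u).mpr hu)
    · intro hw u hu
      rw [hsymm u w, hBapp]
      have := himage ▸ ((hmem w).mp hw)
      exact this u ((hmem u).mp hu)
  have hfr := LinearMap.BilinForm.finrank_orthogonal (B := Bf) hnd D
  rw [hDo] at hfr
  have hV : Module.finrank (ZMod 2) (Fin n → Fin 4 → ZMod 2) = 4 * n := by
    rw [Module.finrank_pi_fintype]
    simp [Module.finrank_pi, mul_comm]
  have hle : Module.finrank (ZMod 2) D ≤ 4 * n := hV ▸ Submodule.finrank_le D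
  rw [hV] at hfr
  have hfr2 : Module.finrank (ZMod 2) D = 2 * n := by omega
  haveI : Fintype D := Fintype.ofFinite D
  have hcard : Nat.card D = 2 ^ (2 * n) := by
    rw [Nat.card_eq_fintype_card, Module.card_eq_pow_finrank (K := ZMod 2) (V := D), ZMod.card, hfr2]
  refine ⟨?_, himage⟩
  rw [← hDset]
  exact hcard
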